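/- Galvin's lemma has no uniform version: there is a family F of finite subsets of ℕ such that no Borel function S : 2^ℕ → 2^ℕ satisfies, for every infinite x ⊆ ℕ, that S(x) ⊆ x, S(x) is infinite, and S(x) is F-homogeneous. -/

import Mathlib

open Set

/-- The Cantor space `2^ℕ`: subsets of `ℕ` identified with their characteristic functions. -/
abbrev Cantor : Type := ℕ → Bool

/-- The subset of `ℕ` coded by a point of Cantor space. -/
def toSet (x : Cantor) : Set ℕ := {n | x n = true}

/-- `s ⊑ z` : the finite set `s` is an initial segment of `z ⊆ ℕ`,
i.e. `s = z ∩ {0,1,…,n}` for some `n`. -/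
def InitSeg (s : Finset ℕ) (z : Set ℕ) : Prop := ∃ n : ℕ, (s : Set ℕ) = z ∩ Set.Iic n

/-- `s ⊑ t` for finite sets `s, t`. -/
def InitSegF (s t : Finset ℕ) : Prop := ∃ n : ℕ, s = t ∩ Finset.Iic n

/-- `B` is a front on the set `x ⊆ ℕ`: all members of `B` are subsets of `x`, any two
members of `B` are `⊑`-incomparable, and every infinite subset of `x` has an initial
segment in `B`. -/
def IsFrontOn (B : Set (Finset ℕ)) (x : Set ℕ) : Prop :=
  (∀ s ∈ B, (s : Set ℕ) ⊆ x) ∧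
  (∀ s ∈ B, ∀ t ∈ B, InitSegF s t → s = t) ∧
  (∀ y : Set ℕ, y ⊆ x → y.Infinite → ∃ s ∈ B, InitSeg s y)

/-- `y` is `F`-homogeneous: either every infinite subset of `y` has an initial segment
in `F`, or no finite subset of `y` belongs to `F`. -/
def Homog (F : Set (Finset ℕ)) (y : Set ℕ) : Prop :=
  (∀ z : Set ℕ, z ⊆ y → z.Infinite → ∃ s ∈ F, InitSeg s z) ∨
  (∀ s : Finset ℕ, (s : Set ℕ) ⊆ y → s ∉ F)

/-- `I` is an ideal on `ℕ`: a family of subsets of `ℕ` closed under taking subsets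
and under finite unions. -/
def IsIdeal (I : Set Cantor) : Prop :=
  (∀ x ∈ I, ∀ y : Cantor, toSet y ⊆ toSet x → y ∈ I) ∧
  (∀ x ∈ I, ∀ y ∈ I, (fun n => x n || y n) ∈ I)

/-- `I` is an `Fσ` subset of the Cantor space. -/
def IsFsigma (I : Set Cantor) : Prop :=
  ∃ C : ℕ → Set Cantor, (∀ n, IsClosed (C n)) ∧ I = ⋃ n, C n

/-- A family `C` is tall if every infinite subset of `ℕ` contains an infinite member of `C`. -/
def Tall (C : Set Cantor) : Prop :=
  ∀ x : Cantor, (toSet x).Infinite → ∃ y ∈ C, (toSet y).Infinite ∧ toSet y ⊆ toSet x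

/-- `S` is a Borel selector for the family `C`. -/
def IsSelector (C : Set Cantor) (S : Cantor → Cantor) : Prop :=
  Measurable S ∧ ∀ x : Cantor,
    toSet (S x) ⊆ toSet x ∧ ((toSet x).Infinite → (toSet (S x)).Infinite) ∧ S x ∈ C

/-- A Borel ideal `I` is uniformly selective. -/
def UnifSelective (I : Set Cantor) : Prop :=
  ∃ F : (ℕ → Cantor) → Cantor, Measurable F ∧
    ∀ xs : ℕ → Cantor, (∀ n, xs n ∉ I) → (∀ n, toSet (xs (n + 1)) ⊆ toSet (xs n)) →
      F xs ∉ I ∧ ∀ n ∈ toSet (F xs), toSet (F xs) \ Set.Iic n ⊆ toSet (xs n)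

/-- A Borel ideal `I` is uniformly `p⁺`. -/
def UnifPplus (I : Set Cantor) : Prop :=
  ∃ G : (ℕ → Cantor) → Cantor, Measurable G ∧
    ∀ xs : ℕ → Cantor, (∀ n, xs n ∉ I) → (∀ n, toSet (xs (n + 1)) ⊆ toSet (xs n)) →
      G xs ∉ I ∧ ∀ n, (toSet (G xs) \ toSet (xs n)).Finite

/-- `(t n)_{n∈ℕ}` is a partition of `x` into finite sets. -/
def FinPartition (x : Cantor) (t : ℕ → Cantor) : Prop :=
  (∀ n, (toSet (t n)).Finite) ∧
  (∀ m n, m ≠ n → Disjoint (toSet (t m)) (toSet (t n))) ∧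
  (⋃ n, toSet (t n)) = toSet x

/-- A Borel ideal `I` is uniformly `q⁺`. -/
def UnifQplus (I : Set Cantor) : Prop :=
  ∃ F : Cantor × (ℕ → Cantor) → Cantor, Measurable F ∧
    ∀ (x : Cantor) (t : ℕ → Cantor), x ∉ I → FinPartition x t →
      toSet (F (x, t)) ⊆ toSet x ∧ F (x, t) ∉ I ∧
      ∀ n, (toSet (F (x, t)) ∩ toSet (t n)).Subsingleton

/-- The ideal `I` is `q⁺`. -/
def Qplus (I : Set Cantor) : Prop :=
  ∀ (x : Cantor) (t : ℕ → Cantor), x ∉ I → FinPartition x t →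
    ∃ y : Cantor, toSet y ⊆ toSet x ∧ y ∉ I ∧
      ∀ n, (toSet y ∩ toSet (t n)).Subsingleton

/-- The ideal `I` is selective. -/
def Selective (I : Set Cantor) : Prop :=
  ∀ xs : ℕ → Cantor, (∀ n, xs n ∉ I) → (∀ n, toSet (xs (n + 1)) ⊆ toSet (xs n)) →
    ∃ x : Cantor, x ∉ I ∧ ∀ n ∈ toSet x, toSet x \ Set.Iic n ⊆ toSet (xs n)

/-- The ideal generated by `K`: `x ∈ IdealGen K` iff `x ⊆ y₁ ∪ … ∪ y_n` for some
`y₁, …, y_n ∈ K`. -/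
def IdealGen (K : Set Cantor) : Set Cantor :=
  {x | ∃ l : List Cantor, l ≠ [] ∧ (∀ y ∈ l, y ∈ K) ∧ toSet x ⊆ ⋃ y ∈ l, toSet y}

/-- `↓K = {x : x ⊆ y for some y ∈ K}`. -/
def Down (K : Set Cantor) : Set Cantor := {x | ∃ y ∈ K, toSet x ⊆ toSet y}

/-- `C` is hereditary: closed under taking subsets. -/
def Hereditary (C : Set Cantor) : Prop :=
  ∀ x ∈ C, ∀ y : Cantor, toSet y ⊆ toSet x → y ∈ C

/-- `A ⊆ 2^ℕ` is `Σ¹₂`: the projection of a coanalytic subset of `2^ℕ × ℕ^ℕ`. -/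
def Sigma12 (A : Set Cantor) : Prop :=
  ∃ C : Set (Cantor × (ℕ → ℕ)), MeasureTheory.AnalyticSet Cᶜ ∧
    A = {x | ∃ w : ℕ → ℕ, (x, w) ∈ C}

/-- `A ⊆ 2^ℕ` is `Π¹₂`: the complement of a `Σ¹₂` set. -/
def Pi12 (A : Set Cantor) : Prop := Sigma12 Aᶜ

namespace NUG

/-- the prefix of `x` of length `n`, as a list -/
def pl {α : Type*} (x : ℕ → α) (n : ℕ) : List α := List.ofFn fun i : Fin n => x i

@[simp] lemma pl_length {α : Type*} (x : ℕ → α) (n : ℕ) : (pl x n).length = n := by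
  simp [pl]

@[simp] lemma pl_zero {α : Type*} (x : ℕ → α) : pl x 0 = [] := by simp [pl]

lemma pl_succ {α : Type*} (x : ℕ → α) (n : ℕ) : pl x (n + 1) = pl x n ++ [x n] := by
  rw [pl, List.ofFn_succ', List.concat_eq_append]
  rfl

lemma pl_take {α : Type*} (x : ℕ → α) {n m : ℕ} (h : n ≤ m) :
    (pl x m).take n = pl x n := by
  induction m with
  | zero => simp_all
  | succ m ih =>
    rcases Nat.lt_or_ge n (m+1) with h' | h'
    · rw [pl_succ, List.take_append_of_le_length (by simp; omega), ih (by omega)]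
    · have : n = m + 1 := le_antisymm h h'
      subst this
      exact List.take_of_length_le (by simp)

lemma pl_getD {α : Type*} (x : ℕ → α) {i n : ℕ} (h : i < n) (d : α) :
    (pl x n).getD i d = x i := by
  rw [List.getD_eq_getElem _ _ (by simpa using h)]
  simp [pl]

lemma pl_eq_iff {α : Type*} {x y : ℕ → α} {n : ℕ} :
    pl x n = pl y n ↔ ∀ i < n, x i = y i := by
  constructor
  · intro h i hi
    have h2 : (pl x n).getD i (x 0) = (pl y n).getD i (x 0) := by rw [h]
    rwa [pl_getD x hi, pl_getD y hi] at h2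
  · intro h
    apply List.ext_getElem (by simp)
    intro i h1 h2
    simp only [pl, List.getElem_ofFn]
    exact h i (by simpa using h1)

/-- encoding of binary strings: leading-one binary value; strictly monotone under extension -/
def enc (l : List Bool) : ℕ := l.foldl (fun n b => 2 * n + cond b 1 0) 1

@[simp] lemma enc_nil : enc [] = 1 := rfl

lemma enc_concat (l : List Bool) (b : Bool) : enc (l ++ [b]) = 2 * enc l + cond b 1 0 := by
  simp [enc, List.foldl_append]

lemma two_pow_le_enc (l : List Bool) : 2 ^ l.length ≤ enc l := by
  induction l using List.reverseRecOn with
  | nil => simp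
  | append_singleton t b ih =>
    rw [enc_concat]
    simp only [List.length_append, List.length_singleton]
    rw [pow_succ]
    cases b <;> simp <;> omega

lemma one_le_enc (l : List Bool) : 1 ≤ enc l :=
  le_trans (Nat.one_le_two_pow) (two_pow_le_enc l)

lemma length_lt_enc (l : List Bool) : l.length < enc l :=
  lt_of_lt_of_le (Nat.lt_two_pow_self) (two_pow_le_enc l)

lemma enc_le_append (l l' : List Bool) : enc l ≤ enc (l ++ l') := by
  induction l' using List.reverseRecOn with
  | nil => simp
  | append_singleton t b ih =>
    rw [← List.append_assoc, enc_concat]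
    have := one_le_enc (l ++ t)
    cases b <;> simp <;> omega

lemma enc_lt_append (l : List Bool) {l' : List Bool} (h : l' ≠ []) :
    enc l < enc (l ++ l') := by
  rcases List.eq_nil_or_concat l' with rfl | ⟨t, b, rfl⟩
  · exact absurd rfl h
  · rw [List.concat_eq_append, ← List.append_assoc, enc_concat]
    have h1 := enc_le_append l t
    have h2 := one_le_enc (l ++ t)
    cases b <;> simp <;> omega

lemma enc_pl_strictMono (a : Cantor) : StrictMono (fun n => enc (pl a n)) := by
  apply strictMono_nat_of_lt_succ
  intro n
  rw [pl_succ]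
  exact enc_lt_append _ (by simp)

lemma enc_injective : Function.Injective enc := by
  intro l₁
  induction l₁ using List.reverseRecOn with
  | nil =>
    intro l₂ h
    rcases List.eq_nil_or_concat l₂ with rfl | ⟨t, b, rfl⟩
    · rfl
    · rw [List.concat_eq_append, enc_concat] at h
      have := one_le_enc t
      simp only [enc_nil] at h
      cases b <;> simp at h <;> omega
  | append_singleton t₁ b₁ ih =>
    intro l₂ h
    rcases List.eq_nil_or_concat l₂ with rfl | ⟨t₂, b₂, rfl⟩
    · rw [enc_concat] at h
      have := one_le_enc t₁
      simp only [enc_nil] at h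
      cases b₁ <;> simp at h <;> omega
    · rw [List.concat_eq_append, enc_concat, enc_concat] at h
      have hb : b₁ = b₂ ∧ enc t₁ = enc t₂ := by
        cases b₁ <;> cases b₂ <;> simp at h ⊢ <;> omega
      simp [List.concat_eq_append, ih hb.2, hb.1]

lemma enc_take_lt {σ : List Bool} {n : ℕ} (h : n < σ.length) :
    enc (σ.take n) < enc σ := by
  conv_rhs => rw [← List.take_append_drop n σ]
  apply enc_lt_append
  simp [List.drop_eq_nil_iff]
  omega

lemma enc_take_le (σ : List Bool) (n : ℕ) : enc (σ.take n) ≤ enc σ := by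
  conv_rhs => rw [← List.take_append_drop n σ]
  exact enc_le_append _ _

lemma enc_take_inj {σ : List Bool} {n n' : ℕ} (hn : n ≤ σ.length) (hn' : n' ≤ σ.length)
    (h : enc (σ.take n) = enc (σ.take n')) : n = n' := by
  have := enc_injective h
  have h1 : (σ.take n).length = (σ.take n').length := by rw [this]
  simpa [Nat.min_eq_left hn, Nat.min_eq_left hn'] using h1

/-- code for queried bit positions -/
def γ' (σ : List Bool) (u : List ℕ) : ℕ := Nat.pair (Encodable.encode (σ, u)) (σ.length + 1)

lemma γ'_inj {σ σ' : List Bool} {u u' : List ℕ} (h : γ' σ u = γ' σ' u') : σ = σ' ∧ u = u' := by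
  have := (Nat.pair_eq_pair.1 h).1
  have := Encodable.encode_injective this
  exact ⟨congrArg Prod.fst this, congrArg Prod.snd this⟩

lemma length_lt_γ' (σ : List Bool) (u : List ℕ) : σ.length < γ' σ u :=
  lt_of_lt_of_le (Nat.lt_succ_self _) (Nat.right_le_pair _ _)

/-- the self-reading analytic set -/
def Astar : Set Cantor := {a | ∃ w : ℕ → ℕ, ∀ j : ℕ, a (γ' (pl a j) (pl w j)) = true}

def δ' (u : List ℕ) : ℕ := Encodable.encode u

lemma δ'_inj : Function.Injective δ' := Encodable.encode_injective

/-- `u` is a witness chain readable inside `σ` -/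
def Tcond (σ : List Bool) (u : List ℕ) : Prop :=
  ∀ j ≤ u.length, γ' (σ.take j) (u.take j) < σ.length ∧
    σ.getD (γ' (σ.take j) (u.take j)) false = true

/-- the probe `(σ, ns)` admits no bounded witness -/
def Pprop (σ : List Bool) (ns : List ℕ) : Prop :=
  ¬ ∃ u : List ℕ, u.length = ns.length ∧ Tcond σ u ∧
      ∀ i < ns.length, δ' (u.take (i + 1)) ≤ enc (σ.take (ns.getD i 0))

/-- `(σ, ns)` is a representation of the finite chain `s` -/
def Rep (σ : List Bool) (ns : List ℕ) (s : Finset ℕ) : Prop :=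
  ns ≠ [] ∧ ns.Pairwise (· < ·) ∧ (∀ n ∈ ns, 1 ≤ n ∧ n ≤ σ.length) ∧ σ.length ∈ ns ∧
    s = (ns.map fun n => enc (σ.take n)).toFinset

/-- the family of finite sets witnessing the failure of uniform Galvin -/
def Fam : Set (Finset ℕ) := {s | ∃ σ ns, Rep σ ns s ∧ Pprop σ ns}

open Classical in
/-- the chain-set coding of `a` -/
noncomputable def Ξ (a : Cantor) : Cantor :=
  fun m => decide (∃ n ∈ Finset.Icc 1 m, enc (pl a n) = m)

lemma mem_toSet_Ξ {a : Cantor} {m : ℕ} : m ∈ toSet (Ξ a) ↔ ∃ n, 1 ≤ n ∧ enc (pl a n) = m := by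
  simp only [toSet, Ξ, Set.mem_setOf_eq, decide_eq_true_eq, Finset.mem_Icc]
  constructor
  · rintro ⟨n, ⟨h1, _⟩, h2⟩; exact ⟨n, h1, h2⟩
  · rintro ⟨n, h1, h2⟩
    refine ⟨n, ⟨h1, ?_⟩, h2⟩
    have := length_lt_enc (pl a n)
    rw [pl_length] at this
    omega

lemma toSet_Ξ_infinite (a : Cantor) : (toSet (Ξ a)).Infinite := by
  have hinj : Function.Injective (fun n : ℕ => enc (pl a (n + 1))) := by
    intro n m h
    have := (enc_pl_strictMono a).injective h
    omega
  exact Set.infinite_of_injective_forall_mem hinj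
    (fun n => mem_toSet_Ξ.2 ⟨n + 1, by omega, rfl⟩)

/-- a representation determines `σ` and `ns` -/
lemma rep_unique {σ σ' : List Bool} {ns ns' : List ℕ} {s : Finset ℕ}
    (h : Rep σ ns s) (h' : Rep σ' ns' s) : σ = σ' ∧ ns = ns' := by
  obtain ⟨hne, hsort, hbd, hlast, hs⟩ := h
  obtain ⟨hne', hsort', hbd', hlast', hs'⟩ := h'
  -- members of s are enc of takes
  have hmem : ∀ m, m ∈ s ↔ ∃ n ∈ ns, enc (σ.take n) = m := by
    intro m
    rw [hs]
    simp [List.mem_toFinset, eq_comm]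
  have hmem' : ∀ m, m ∈ s ↔ ∃ n ∈ ns', enc (σ'.take n) = m := by
    intro m
    rw [hs']
    simp [List.mem_toFinset, eq_comm]
  -- enc σ is the max of s
  have hself : enc σ ∈ s := (hmem _).2 ⟨σ.length, hlast, by rw [List.take_length]⟩
  have hself' : enc σ' ∈ s := (hmem' _).2 ⟨σ'.length, hlast', by rw [List.take_length]⟩
  have hub : ∀ m ∈ s, m ≤ enc σ := by
    intro m hm
    obtain ⟨n, _, rfl⟩ := (hmem m).1 hm
    exact enc_take_le σ n
  have hub' : ∀ m ∈ s, m ≤ enc σ' := by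
    intro m hm
    obtain ⟨n, _, rfl⟩ := (hmem' m).1 hm
    exact enc_take_le σ' n
  have hσ : σ = σ' :=
    enc_injective (le_antisymm (hub' _ hself) (hub _ hself'))
  subst hσ
  refine ⟨rfl, ?_⟩
  -- ns is determined by membership
  have hns : ∀ n, n ∈ ns ↔ n ∈ ns' := by
    intro n
    constructor
    · intro hn
      obtain ⟨n', hn', he⟩ := (hmem' _).1 ((hmem _).2 ⟨n, hn, rfl⟩)
      rwa [enc_take_inj (hbd' n' hn').2 (hbd n hn).2 he] at hn'
    · intro hn
      obtain ⟨n', hn', he⟩ := (hmem _).1 ((hmem' _).2 ⟨n, hn, rfl⟩)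
      rwa [enc_take_inj (hbd n' hn').2 (hbd' n hn).2 he] at hn'
  haveI : IsAntisymm ℕ (· < ·) := ⟨fun a b h1 h2 => absurd h1 (asymm h2)⟩
  exact List.Perm.eq_of_pairwise (fun a b _ _ h1 h2 => absurd h1 (asymm h2)) hsort hsort'
    ((List.perm_ext_iff_of_nodup hsort.nodup hsort'.nodup).2 hns)


/-- the tree of bounded witnesses for `a` -/
def TreeT (a : Cantor) (mb : ℕ → ℕ) : Set (List ℕ) :=
  {u | (∀ j ≤ u.length, a (γ' (pl a j) (u.take j)) = true) ∧
    ∀ i < u.length, δ' (u.take (i + 1)) ≤ mb i}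

lemma treeT_take {a : Cantor} {mb : ℕ → ℕ} {u : List ℕ} (hu : u ∈ TreeT a mb) (t : ℕ) :
    u.take t ∈ TreeT a mb := by
  obtain ⟨h1, h2⟩ := hu
  constructor
  · intro j hj
    have hj' : j ≤ u.length := le_trans hj (by simp)
    have : (u.take t).take j = u.take j := by
      rw [List.take_take]
      congr 1
      simp only [List.length_take] at hj
      omega
    rw [this]
    exact h1 j hj'
  · intro i hi
    have hi' : i < u.length := lt_of_lt_of_le hi (by simp)
    have hit : i + 1 ≤ t := by
      simp only [List.length_take] at hi
      omega
    have : (u.take t).take (i + 1) = u.take (i + 1) := by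
      rw [List.take_take]
      congr 1
      omega
    rw [this]
    exact h2 i hi'

lemma treeT_branch {a : Cantor} {mb : ℕ → ℕ}
    (hlen : ∀ k, ∃ u ∈ TreeT a mb, u.length = k) : a ∈ Astar := by
  classical
  set T := TreeT a mb with hT
  -- finiteness of children
  have child_fin : ∀ u : List ℕ, {x : ℕ | u ++ [x] ∈ T}.Finite := by
    intro u
    apply Set.Finite.of_finite_image (f := fun x => δ' (u ++ [x]))
    · apply Set.Finite.subset (Set.finite_Iic (mb u.length))
      rintro d ⟨x, hx, rfl⟩
      have := hx.2 u.length (by simp)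
      simpa [List.take_of_length_le] using this
    · intro x _ x' _ h
      have := δ'_inj h
      simpa using this
  -- bigness
  set Big : List ℕ → Prop := fun u => ∀ N, ∃ v ∈ T, u <+: v ∧ N ≤ v.length with hBig
  have big_nil : Big [] := by
    intro N
    obtain ⟨v, hv, hvl⟩ := hlen N
    exact ⟨v, hv, List.nil_prefix, by omega⟩
  have big_in_tree : ∀ u, Big u → u ∈ T := by
    intro u hu
    obtain ⟨v, hv, hpre, _⟩ := hu u.length
    rw [List.prefix_iff_eq_take.1 hpre]
    exact treeT_take hv _
  have big_step : ∀ u, Big u → ∃ x, Big (u ++ [x]) := by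
    intro u hu
    by_contra hcon
    push_neg at hcon
    simp only [hBig, not_forall] at hcon
    have hcon' : ∀ x : ℕ, ∃ N : ℕ, ∀ v ∈ T, u ++ [x] <+: v → v.length < N := by
      intro x
      obtain ⟨N, hN⟩ := hcon x
      push_neg at hN
      exact ⟨N, fun v hv hp => hN v hv hp⟩
    choose Nf hNf using hcon'
    set D := (child_fin u).toFinset with hD
    obtain ⟨v, hv, hpre, hvl⟩ := hu (D.sup Nf + u.length + 1)
    have hlen' : u.length < v.length := by omega
    have hx : u ++ [v.getD u.length 0] = v.take (u.length + 1) := by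
      rw [List.take_succ, List.getElem?_eq_getElem hlen',
        ← List.prefix_iff_eq_take.1 hpre, List.getD_eq_getElem _ _ hlen']
      rfl
    set x := v.getD u.length 0 with hxdef
    have hmem : u ++ [x] ∈ T := by
      rw [hx]; exact treeT_take hv _
    have hxD : x ∈ D := by
      rw [hD, Set.Finite.mem_toFinset]; exact hmem
    have hple : u ++ [x] <+: v := by
      rw [hx]; exact List.take_prefix _ _
    have := hNf x v hv hple
    have := Finset.le_sup (f := Nf) hxD
    omega
  -- build the branch
  set ch : List ℕ → ℕ := fun u => if h : Big u then Classical.choose (big_step u h) else 0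
    with hch
  set f : ℕ → List ℕ := fun k => Nat.rec [] (fun _ v => v ++ [ch v]) k with hf
  have hf0 : f 0 = [] := rfl
  have hfs : ∀ k, f (k + 1) = f k ++ [ch (f k)] := fun k => rfl
  have hfprop : ∀ k, Big (f k) ∧ (f k).length = k := by
    intro k
    induction k with
    | zero => exact ⟨big_nil, rfl⟩
    | succ k ih =>
      rw [hfs]
      constructor
      · simp only [hch]
        rw [dif_pos ih.1]
        exact Classical.choose_spec (big_step (f k) ih.1)
      · simp [ih.2]
  set w : ℕ → ℕ := fun j => (f (j + 1)).getD j 0 with hw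
  have hplw : ∀ k, pl w k = f k := by
    intro k
    induction k with
    | zero => simp [hf0]
    | succ k ih =>
      rw [pl_succ, ih, hfs]
      congr 1
      rw [hw]
      simp only [hfs k]
      rw [List.getD_append_right (f k) [ch (f k)] 0 k (le_of_eq (hfprop k).2)]
      simp [(hfprop k).2]
  refine ⟨w, fun j => ?_⟩
  have hmem : pl w j ∈ T := by
    rw [hplw]
    exact big_in_tree _ (hfprop j).1
  have := hmem.1 j (by simp)
  rwa [List.take_of_length_le (by simp)] at this


lemma getD_map_range (f : ℕ → ℕ) {k i : ℕ} (h : i < k) :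
    ((List.range k).map f).getD i 0 = f i := by
  rw [List.getD_eq_getElem _ _ (by simpa using h)]
  simp

/-- (R1): if `a ∉ Astar` then every infinite subset of `x_a` contains a member of `Fam` -/
lemma tall_of_not_mem_Astar {a : Cantor} (ha : a ∉ Astar) {y : Set ℕ}
    (hsub : y ⊆ toSet (Ξ a)) (hy : y.Infinite) : ∃ s ∈ Fam, (↑s : Set ℕ) ⊆ y := by
  classical
  by_contra hcon
  push_neg at hcon
  -- the set of levels of y
  set L : ℕ → Prop := fun n => 1 ≤ n ∧ enc (pl a n) ∈ y with hL
  have hLinf : {n | L n}.Infinite := by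
    intro hfin
    apply hy
    apply Set.Finite.subset (Set.Finite.image (fun n => enc (pl a n)) hfin)
    intro m hm
    obtain ⟨n, h1, h2⟩ := mem_toSet_Ξ.1 (hsub hm)
    exact ⟨n, ⟨h1, h2 ▸ hm⟩, h2⟩
  set nth : ℕ → ℕ := Nat.nth L with hnth
  have hmemL : ∀ i, L (nth i) := fun i => Nat.nth_mem_of_infinite hLinf i
  have hmono : StrictMono nth := fun i j h => (Nat.nth_lt_nth hLinf).2 h
  have hge : ∀ i, i + 1 ≤ nth i := by
    intro i
    induction i with
    | zero => exact (hmemL 0).1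
    | succ i ih => have := hmono (by omega : i < i + 1); omega
  set mB : ℕ → ℕ := fun i => enc (pl a (nth i)) with hmB
  -- witnesses at every finite stage
  have key : ∀ k : ℕ, 1 ≤ k → ∃ u : List ℕ, u.length = k ∧
      (∀ j ≤ k, a (γ' (pl a j) (u.take j)) = true) ∧
      ∀ i < k, δ' (u.take (i + 1)) ≤ mB i := by
    intro k hk
    set σk : List Bool := pl a (nth (k - 1)) with hσk
    set nsk : List ℕ := (List.range k).map nth with hnsk
    have hσlen : σk.length = nth (k - 1) := by simp [hσk]
    have hkle : k ≤ nth (k - 1) := by have := hge (k - 1); omega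
    have htake : ∀ i < k, σk.take (nth i) = pl a (nth i) := by
      intro i hi
      rw [hσk]
      exact pl_take a (hmono.monotone (by omega))
    have hrep : Rep σk nsk (((List.range k).map (fun i => mB i)).toFinset) := by
      refine ⟨?_, ?_, ?_, ?_, ?_⟩
      · simp [hnsk]; omega
      · rw [hnsk]
        exact List.pairwise_map.2 (List.pairwise_lt_range.imp (fun h => hmono h))
      · rw [hnsk]
        intro n hn
        simp only [List.mem_map, List.mem_range] at hn
        obtain ⟨i, hi, rfl⟩ := hn
        refine ⟨(hmemL i).1, ?_⟩
        rw [hσlen]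
        exact hmono.monotone (by omega)
      · rw [hnsk, hσlen]
        simp only [List.mem_map, List.mem_range]
        exact ⟨k - 1, by omega, rfl⟩
      · rw [hnsk, List.map_map]
        congr 1
        apply List.map_congr_left
        intro i hi
        simp only [Function.comp_apply]
        rw [htake i (List.mem_range.1 hi), hmB]
    have hsubs : (↑(((List.range k).map (fun i => mB i)).toFinset) : Set ℕ) ⊆ y := by
      intro m hm
      simp only [Finset.coe_sort_coe, List.coe_toFinset, List.mem_map, List.mem_range,
        Set.mem_setOf_eq] at hm
      obtain ⟨i, _, rfl⟩ := hm
      exact (hmemL i).2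
    have hnp : ¬ Pprop σk nsk := fun hp => hcon _ ⟨σk, nsk, hrep, hp⟩ hsubs
    rw [Pprop, not_not] at hnp
    obtain ⟨u, hul, htc, hbd⟩ := hnp
    have hulk : u.length = k := by rw [hul, hnsk]; simp
    refine ⟨u, hulk, ?_, ?_⟩
    · intro j hj
      obtain ⟨hlt, hbit⟩ := htc j (by omega)
      have htkj : σk.take j = pl a j := by
        rw [hσk]; exact pl_take a (le_trans hj hkle)
      rw [htkj] at hlt hbit
      rw [hσlen] at hlt
      rwa [hσk, pl_getD a hlt] at hbit
    · intro i hi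
      have hnsl : nsk.length = k := by simp [hnsk]
      have := hbd i (by rw [hnsl]; exact hi)
      rwa [getD_map_range nth hi, htake i hi] at this
  -- build the branch tree
  apply ha
  apply treeT_branch (mb := mB)
  intro k
  obtain ⟨u, hul, h1, h2⟩ := key (k + 1) (by omega)
  refine ⟨u.take k, ?_, by simp [hul]⟩
  have : u ∈ TreeT a mB := by
    refine ⟨?_, ?_⟩
    · intro j hj; exact h1 j (by omega)
    · intro i hi; exact h2 i (by omega)
  exact treeT_take this k


/-- (R2): if `a ∈ Astar` then every infinite subset of `x_a` contains an infinite set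
none of whose initial segments lies in `Fam` -/
lemma escape_of_mem_Astar {a : Cantor} (ha : a ∈ Astar) {y : Set ℕ}
    (hsub : y ⊆ toSet (Ξ a)) (hy : y.Infinite) :
    ∃ z : Set ℕ, z ⊆ y ∧ z.Infinite ∧ ∀ s ∈ Fam, ¬ InitSeg s z := by
  classical
  obtain ⟨w, hw⟩ := ha
  set L : ℕ → Prop := fun n => 1 ≤ n ∧ enc (pl a n) ∈ y with hL
  have hLinf : {n | L n}.Infinite := by
    intro hfin
    apply hy
    apply Set.Finite.subset (Set.Finite.image (fun n => enc (pl a n)) hfin)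
    intro m hm
    obtain ⟨n, h1, h2⟩ := mem_toSet_Ξ.1 (hsub hm)
    exact ⟨n, ⟨h1, h2 ▸ hm⟩, h2⟩
  set Bnd : ℕ → ℕ := fun i =>
    max (i + 2) (max (δ' (pl w (i + 1)))
      ((Finset.range (i + 2)).sup (fun j => γ' (pl a j) (pl w j) + 1))) with hBnd
  set f : ℕ → ℕ := fun i => Nat.rec (Classical.choose (hLinf.exists_gt (Bnd 0)))
    (fun i n => Classical.choose (hLinf.exists_gt (max n (Bnd (i + 1))))) i with hf
  have hf0 : L (f 0) ∧ Bnd 0 < f 0 := by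
    have h := Classical.choose_spec (hLinf.exists_gt (Bnd 0))
    exact ⟨h.1, h.2⟩
  have hfs : ∀ i, L (f (i + 1)) ∧ max (f i) (Bnd (i + 1)) < f (i + 1) := by
    intro i
    have h := Classical.choose_spec (hLinf.exists_gt (max (f i) (Bnd (i + 1))))
    exact ⟨h.1, h.2⟩
  have hfL : ∀ i, L (f i) := by rintro (_ | i); exacts [hf0.1, (hfs i).1]
  have hfB : ∀ i, Bnd i < f i := by
    rintro (_ | i)
    · exact hf0.2
    · exact lt_of_le_of_lt (le_max_right _ _) (hfs i).2
  have hfmono : StrictMono f :=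
    strictMono_nat_of_lt_succ fun i => lt_of_le_of_lt (le_max_left _ _) (hfs i).2
  -- consequences of the bound
  have hfB' : ∀ i, max (i + 2) (max (δ' (pl w (i + 1)))
      ((Finset.range (i + 2)).sup (fun j => γ' (pl a j) (pl w j) + 1))) < f i := by
    intro i
    have hb := hfB i
    simpa only [hBnd] using hb
  have hfge : ∀ i, i + 2 ≤ f i := by
    intro i
    have := hfB' i
    omega
  have hfδ : ∀ i, δ' (pl w (i + 1)) ≤ f i := by
    intro i
    have := hfB' i
    omega
  have hfγ : ∀ i, ∀ j ≤ i + 1, γ' (pl a j) (pl w j) < f i := by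
    intro i j hj
    have h1 : γ' (pl a j) (pl w j) + 1 ≤ (Finset.range (i + 2)).sup
        (fun j => γ' (pl a j) (pl w j) + 1) :=
      Finset.le_sup (f := fun j => γ' (pl a j) (pl w j) + 1)
        (Finset.mem_range.2 (show j < i + 2 by omega))
    have h2 := hfB' i
    omega
  set g : ℕ → ℕ := fun i => enc (pl a (f i)) with hg
  have hgmono : StrictMono g := fun i j h => (enc_pl_strictMono a) (hfmono h)
  refine ⟨Set.range g, ?_, ?_, ?_⟩
  · rintro m ⟨i, rfl⟩
    exact (hfL i).2
  · exact Set.infinite_range_of_injective hgmono.injective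
  · rintro s ⟨σ, ns, hrep, hp⟩ ⟨q, hq⟩
    -- initial segments of z are given by an index cut k
    have hgex : ∃ i, q < g i := by
      exact ⟨q + 1, lt_of_lt_of_le (by omega) (hgmono.le_apply (x := q + 1))⟩
    set k := Nat.find hgex with hk
    have hklt : q < g k := Nat.find_spec hgex
    have hkmin : ∀ i < k, g i ≤ q := fun i hi => le_of_not_gt (Nat.find_min hgex hi)
    have hset : (↑s : Set ℕ) = {m | ∃ i < k, g i = m} := by
      rw [hq]
      ext m
      simp only [Set.mem_inter_iff, Set.mem_range, Set.mem_Iic, Set.mem_setOf_eq]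
      constructor
      · rintro ⟨⟨i, rfl⟩, hle⟩
        refine ⟨i, ?_, rfl⟩
        by_contra hik
        push_neg at hik
        have := hgmono.monotone hik
        omega
      · rintro ⟨i, hik, rfl⟩
        exact ⟨⟨i, rfl⟩, hkmin i hik⟩
    -- k cannot be 0 since s is nonempty
    have hk1 : 1 ≤ k := by
      by_contra hk0
      push_neg at hk0
      interval_cases k
      have hns : enc σ ∈ s := by
        rw [hrep.2.2.2.2]
        simp only [List.mem_toFinset, List.mem_map]
        exact ⟨σ.length, hrep.2.2.2.1, by rw [List.take_length]⟩
      have : (enc σ : ℕ) ∈ (↑s : Set ℕ) := hns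
      rw [hset] at this
      obtain ⟨i, hi, _⟩ := this
      omega
    -- the canonical representation
    set σ' : List Bool := pl a (f (k - 1)) with hσ'
    set ns' : List ℕ := (List.range k).map f with hns'
    have hσ'len : σ'.length = f (k - 1) := by simp [hσ']
    have hkle : k + 1 ≤ f (k - 1) := by have := hfge (k - 1); omega
    have htake : ∀ i < k, σ'.take (f i) = pl a (f i) := by
      intro i hi
      rw [hσ']
      exact pl_take a (hfmono.monotone (by omega))
    have hrep' : Rep σ' ns' s := by
      refine ⟨?_, ?_, ?_, ?_, ?_⟩
      · simp [hns']; omega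
      · rw [hns']
        exact List.pairwise_map.2 (List.pairwise_lt_range.imp (fun h => hfmono h))
      · rw [hns']
        intro n hn
        simp only [List.mem_map, List.mem_range] at hn
        obtain ⟨i, hi, rfl⟩ := hn
        refine ⟨(hfL i).1, ?_⟩
        rw [hσ'len]
        exact hfmono.monotone (by omega)
      · rw [hns', hσ'len]
        simp only [List.mem_map, List.mem_range]
        exact ⟨k - 1, by omega, rfl⟩
      · apply Finset.coe_injective
        rw [hset]
        rw [hns', List.map_map]
        ext m
        simp only [Set.mem_setOf_eq, List.coe_toFinset, List.mem_map, List.mem_range,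
          Function.comp_apply]
        constructor
        · rintro ⟨i, hi, rfl⟩
          exact ⟨i, hi, by rw [htake i hi]⟩
        · rintro ⟨i, hi, rfl⟩
          exact ⟨i, hi, by rw [htake i hi]⟩
    obtain ⟨hσeq, hnseq⟩ := rep_unique hrep hrep'
    subst hσeq; subst hnseq
    -- refute Pprop with the branch witness
    apply hp
    refine ⟨pl w k, by simp [hns'], ?_, ?_⟩
    · intro j hj
      rw [pl_length] at hj
      have htj : σ'.take j = pl a j := by
        rw [hσ']
        exact pl_take a (by omega)
      have htj' : (pl w k).take j = pl w j := pl_take w hj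
      rw [htj, htj']
      have hγ : γ' (pl a j) (pl w j) < σ'.length := by
        rw [hσ'len]
        exact hfγ (k - 1) j (by omega)
      refine ⟨hγ, ?_⟩
      rw [hσ'len] at hγ
      rw [hσ', pl_getD a hγ]
      exact hw j
    · intro i hi
      have hil : i < k := by
        simp only [hns', List.length_map, List.length_range] at hi
        exact hi
      rw [getD_map_range f hil]
      rw [htake i hil]
      have h1 : (pl w k).take (i + 1) = pl w (i + 1) := pl_take w (by omega)
      rw [h1]
      have h2 := hfδ i
      have h3 : f i < enc (pl a (f i)) := by
        have := length_lt_enc (pl a (f i))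
        rwa [pl_length] at this
      omega


/-- every analytic subset of Cantor space is the projection of a "tree-like" relation -/
lemma analytic_normal_form {C : Set Cantor} (hC : MeasureTheory.AnalyticSet C) :
    ∃ Q : List Bool → List ℕ → Prop,
      C = {a | ∃ w : ℕ → ℕ, ∀ k, Q (pl a k) (pl w k)} := by
  rw [MeasureTheory.AnalyticSet] at hC
  rcases hC with rfl | ⟨f, hf, rfl⟩
  · refine ⟨fun _ _ => False, ?_⟩
    ext a
    simp
  · refine ⟨fun σ u => ∃ v : ℕ → ℕ, (∀ i < u.length, v i = u.getD i 0) ∧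
      ∀ i < σ.length, f v i = σ.getD i false, ?_⟩
    ext a
    simp only [Set.mem_range, Set.mem_setOf_eq]
    constructor
    · rintro ⟨w, rfl⟩
      refine ⟨w, fun k => ⟨w, ?_, ?_⟩⟩
      · intro i hi
        rw [pl_length] at hi
        rw [pl_getD w hi]
      · intro i hi
        rw [pl_length] at hi
        rw [pl_getD (f w) hi]
    · rintro ⟨w, hw⟩
      choose v hv1 hv2 using hw
      refine ⟨w, ?_⟩
      have hvw : Filter.Tendsto v Filter.atTop (nhds w) := by
        rw [tendsto_pi_nhds]
        intro i
        apply Filter.Tendsto.congr' _ (tendsto_const_nhds (x := w i))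
        filter_upwards [Filter.eventually_gt_atTop i] with k hk
        have := hv1 k i (by rw [pl_length]; omega)
        rw [this, pl_getD w hk]
      have h1 : Filter.Tendsto (fun k => f (v k)) Filter.atTop (nhds (f w)) :=
        (hf.tendsto w).comp hvw
      have h2 : Filter.Tendsto (fun k => f (v k)) Filter.atTop (nhds a) := by
        rw [tendsto_pi_nhds]
        intro i
        apply Filter.Tendsto.congr' _ (tendsto_const_nhds (x := a i))
        filter_upwards [Filter.eventually_gt_atTop i] with k hk
        have := hv2 k i (by rw [pl_length]; omega)
        rw [this, pl_getD a hk]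
      exact tendsto_nhds_unique h1 h2

section Diag

variable (Q : List Bool → List ℕ → Prop)

open Classical in
/-- the diagonal fixed-point prefix sequence -/
noncomputable def prefA : ℕ → List Bool
  | 0 => []
  | m + 1 => prefA m ++
      [decide (∃ p : List Bool × List ℕ, γ' p.1 p.2 = m ∧
        p.1 = (prefA m).take p.1.length ∧ Q p.1 p.2)]

open Classical in
/-- the diagonal fixed point -/
noncomputable def aDiag : Cantor := fun m =>
  decide (∃ p : List Bool × List ℕ, γ' p.1 p.2 = m ∧
    p.1 = (prefA Q m).take p.1.length ∧ Q p.1 p.2)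

lemma prefA_length : ∀ m, (prefA Q m).length = m := by
  intro m
  induction m with
  | zero => rfl
  | succ m ih => simp [prefA, ih]

lemma prefA_eq : ∀ m, prefA Q m = pl (aDiag Q) m := by
  intro m
  induction m with
  | zero => simp [prefA]
  | succ m ih =>
    rw [pl_succ, ← ih]
    rfl

lemma aDiag_γ' (σ : List Bool) (u : List ℕ) :
    aDiag Q (γ' σ u) = true ↔ (σ = pl (aDiag Q) σ.length ∧ Q σ u) := by
  classical
  have hlt : σ.length ≤ γ' σ u := le_of_lt (length_lt_γ' σ u)
  have htake : (prefA Q (γ' σ u)).take σ.length = pl (aDiag Q) σ.length := by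
    rw [prefA_eq]
    exact pl_take _ hlt
  rw [aDiag, decide_eq_true_eq]
  constructor
  · rintro ⟨p, hp, h1, h2⟩
    obtain ⟨rfl, rfl⟩ := γ'_inj hp
    rw [htake] at h1
    exact ⟨h1, h2⟩
  · rintro ⟨h1, h2⟩
    exact ⟨(σ, u), rfl, by rw [htake]; exact h1, h2⟩

end Diag

/-- `Astar` is not Borel -/
lemma astar_not_measurableSet : ¬ MeasurableSet Astar := by
  intro hmeas
  haveI : PolishSpace Cantor := by constructor <;> infer_instance
  have hc : MeasureTheory.AnalyticSet Astarᶜ := hmeas.compl.analyticSet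
  obtain ⟨Q, hQ⟩ := analytic_normal_form hc
  set a := aDiag Q with haQ
  have hiff : a ∈ Astar ↔ ∃ w : ℕ → ℕ, ∀ k, Q (pl a k) (pl w k) := by
    simp only [Astar, Set.mem_setOf_eq]
    constructor
    · rintro ⟨w, hw⟩
      exact ⟨w, fun k => ((aDiag_γ' Q (pl a k) (pl w k)).1 (hw k)).2⟩
    · rintro ⟨w, hw⟩
      refine ⟨w, fun j => ?_⟩
      apply (aDiag_γ' Q (pl a j) (pl w j)).2
      exact ⟨by rw [pl_length], hw j⟩
  have hcompl : a ∈ Astarᶜ ↔ ∃ w : ℕ → ℕ, ∀ k, Q (pl a k) (pl w k) := by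
    rw [hQ]
    simp
  simp only [Set.mem_compl_iff] at hcompl
  tauto


lemma measurable_pl_eq (m : ℕ) (l : List Bool) : MeasurableSet {a : Cantor | pl a m = l} := by
  by_cases hl : l.length = m
  · have heq : {a : Cantor | pl a m = l} =
        ⋂ i ∈ Finset.range m, {a : Cantor | a i = l.getD i false} := by
      ext a
      simp only [Set.mem_setOf_eq, Set.mem_iInter, Finset.mem_range]
      constructor
      · rintro rfl i hi
        rw [pl_getD a hi]
      · intro h
        apply List.ext_getElem (by simp [hl])
        intro i h1 h2
        simp only [pl, List.getElem_ofFn]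
        have h3 := h i (by simpa using h1)
        rw [← List.getD_eq_getElem l false h2, ← h3]
    rw [heq]
    apply MeasurableSet.biInter ((Finset.range m) : Finset ℕ).countable_toSet
    intro i _
    have h : {a : Cantor | a i = l.getD i false} =
        (fun a : Cantor => a i) ⁻¹' {l.getD i false} := rfl
    rw [h]
    exact measurable_pi_apply i (measurableSet_singleton _)
  · have heq : {a : Cantor | pl a m = l} = ∅ := by
      ext a
      simp only [Set.mem_setOf_eq, Set.mem_empty_iff_false, iff_false]
      intro h
      apply hl
      rw [← h, pl_length]
    rw [heq]
    exact MeasurableSet.empty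

lemma measurable_Xi : Measurable Ξ := by
  apply measurable_pi_lambda
  intro m
  apply measurable_to_countable'
  intro b
  have htrue : (fun a => Ξ a m) ⁻¹' {true} =
      ⋃ (l : List Bool), ⋃ (_ : l.length = m ∧ ∃ n ∈ Finset.Icc 1 m, enc (l.take n) = m),
        {a : Cantor | pl a m = l} := by
    ext a
    simp only [Set.mem_preimage, Set.mem_singleton_iff, Set.mem_iUnion, Set.mem_setOf_eq]
    constructor
    · intro h
      have h' : ∃ n ∈ Finset.Icc 1 m, enc (pl a n) = m := by
        simpa [Ξ] using h
      obtain ⟨n, hn, he⟩ := h'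
      refine ⟨pl a m, ⟨by simp, ⟨n, hn, ?_⟩⟩, rfl⟩
      rw [pl_take a (Finset.mem_Icc.1 hn).2]
      exact he
    · rintro ⟨l, ⟨hlen, n, hn, he⟩, hpl⟩
      simp only [Ξ, decide_eq_true_eq]
      refine ⟨n, hn, ?_⟩
      rw [← hpl] at he
      rwa [pl_take a (Finset.mem_Icc.1 hn).2] at he
  have hmeas_true : MeasurableSet ((fun a => Ξ a m) ⁻¹' {true}) := by
    rw [htrue]
    exact MeasurableSet.iUnion fun l => MeasurableSet.iUnion fun _ => measurable_pl_eq m l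
  cases b
  · have : (fun a => Ξ a m) ⁻¹' {false} = ((fun a => Ξ a m) ⁻¹' {true})ᶜ := by
      ext a
      simp only [Set.mem_preimage, Set.mem_singleton_iff, Set.mem_compl_iff]
      cases h : Ξ a m <;> simp
    rw [this]
    exact hmeas_true.compl
  · exact hmeas_true

end NUG

/-- Galvin's lemma has no uniform version: there is a family `F` of finite subsets of `ℕ`
such that no Borel function `S : 2^ℕ → 2^ℕ` produces, for every infinite `x`, an infinite
`F`-homogeneous subset `S(x) ⊆ x`. -/
theorem no_uniform_galvin :
    ∃ F : Set (Finset ℕ),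
      ¬ ∃ S : Cantor → Cantor, Measurable S ∧
        ∀ x : Cantor, (toSet x).Infinite →
          toSet (S x) ⊆ toSet x ∧ (toSet (S x)).Infinite ∧ Homog F (toSet (S x)) := by
  refine ⟨NUG.Fam, ?_⟩
  rintro ⟨S, hS, hspec⟩
  set B : Set Cantor :=
    {a | ∃ s : Finset ℕ, s ∈ NUG.Fam ∧ (↑s : Set ℕ) ⊆ toSet (S (NUG.Ξ a))} with hB
  have hBmeas : MeasurableSet B := by
    have hrw : B = ⋃ (s : Finset ℕ), ⋃ (_ : s ∈ NUG.Fam),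
        ⋂ m ∈ (s : Finset ℕ), {a : Cantor | S (NUG.Ξ a) m = true} := by
      ext a
      simp only [hB, Set.mem_setOf_eq, Set.mem_iUnion, Set.mem_iInter]
      constructor
      · rintro ⟨s, hsF, hsub⟩
        exact ⟨s, hsF, fun m hm => hsub hm⟩
      · rintro ⟨s, hsF, h⟩
        exact ⟨s, hsF, fun m hm => h m hm⟩
    rw [hrw]
    apply MeasurableSet.iUnion
    intro s
    apply MeasurableSet.iUnion
    intro _
    apply MeasurableSet.biInter (s : Finset ℕ).countable_toSet
    intro m _
    have hcomp : Measurable (fun a => S (NUG.Ξ a) m) :=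
      (measurable_pi_apply m).comp (hS.comp NUG.measurable_Xi)
    have h : {a : Cantor | S (NUG.Ξ a) m = true} =
        (fun a => S (NUG.Ξ a) m) ⁻¹' {true} := rfl
    rw [h]
    exact hcomp (measurableSet_singleton true)
  have hBeq : B = NUG.Astarᶜ := by
    ext a
    obtain ⟨hsub, hinf, hhom⟩ := hspec (NUG.Ξ a) (NUG.toSet_Ξ_infinite a)
    simp only [Set.mem_compl_iff, hB, Set.mem_setOf_eq]
    constructor
    · rintro ⟨s, hsF, hsY⟩ ha
      obtain ⟨z, hzsub, hzinf, hz⟩ := NUG.escape_of_mem_Astar ha hsub hinf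
      cases hhom with
      | inl h1 =>
        obtain ⟨s', hs'F, hs'init⟩ := h1 z hzsub hzinf
        exact hz s' hs'F hs'init
      | inr h2 => exact h2 s hsY hsF
    · intro ha
      obtain ⟨s, hsF, hsY⟩ := NUG.tall_of_not_mem_Astar ha hsub hinf
      exact ⟨s, hsF, hsY⟩
  apply NUG.astar_not_measurableSet
  have h := hBmeas.compl
  rwa [hBeq, compl_compl] at h
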